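/- Suppose the value group |k^×| is dense in (0,∞). For any Banach k-algebra A, the adic closure (A°)^{ac} of the subring of power-bounded elements coincides with { a ∈ A : ρ_A(a) ≤ 1 }, where ρ_A is the spectral radius function. -/

import Mathlib

open Pointwise

/-!
STATEMENT 6: Suppose the value group `|k^×|` is dense in `(0,∞)` (`DenselyNormedField k`).
For any Banach `k`-algebra `A`, the adic closure `(A°)^{ac} = ⋂_{r>1} k(r)·A°` of the
subring of power-bounded elements coincides with `{ a : ρ_A(a) ≤ 1 }`, where
`ρ_A(a) = inf_{n≥1} ‖aⁿ‖^{1/n}` is the spectral radius function.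
-/

def kball (k : Type*) [NormedField k] (r : ℝ) : Set k := {c | ‖c‖ ≤ r}

noncomputable def specRad {A : Type*} [NormedRing A] (a : A) : ℝ :=
  ⨅ n : ℕ+, ‖a ^ (n : ℕ)‖ ^ (((n : ℕ) : ℝ))⁻¹

def PowBdd {A : Type*} [NormedRing A] (a : A) : Prop := ∃ C : ℝ, ∀ n : ℕ, ‖a ^ n‖ ≤ C

lemma specRad_bddBelow {A : Type*} [NormedRing A] (a : A) :
    BddBelow (Set.range fun n : ℕ+ => ‖a ^ (n : ℕ)‖ ^ (((n : ℕ) : ℝ))⁻¹) :=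
  ⟨0, by rintro x ⟨n, rfl⟩; exact Real.rpow_nonneg (norm_nonneg _) _⟩

lemma specRad_le {A : Type*} [NormedRing A] (a : A) (n : ℕ+) :
    specRad a ≤ ‖a ^ (n : ℕ)‖ ^ (((n : ℕ) : ℝ))⁻¹ :=
  ciInf_le (specRad_bddBelow a) n

lemma specRad_smul_le {k A : Type*} [NormedField k] [NormedRing A]
    [NormedAlgebra k A] (c : k) (b : A) (hb : PowBdd b) :
    specRad (c • b) ≤ ‖c‖ := by
  obtain ⟨C₀, hC₀⟩ := hb
  set C := max C₀ 1 with hCdef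
  have hC1 : (1 : ℝ) ≤ C := le_max_right _ _
  have hC0 : (0 : ℝ) < C := lt_of_lt_of_le one_pos hC1
  have hb' : ∀ n : ℕ, ‖b ^ n‖ ≤ C := fun n => (hC₀ n).trans (le_max_left _ _)
  have htend : Filter.Tendsto (fun n : ℕ => ‖c‖ * C ^ ((n : ℝ))⁻¹)
      Filter.atTop (nhds ‖c‖) := by
    have h1 : Filter.Tendsto (fun n : ℕ => ((n : ℝ))⁻¹) Filter.atTop (nhds 0) :=
      tendsto_inv_atTop_zero.comp tendsto_natCast_atTop_atTop
    have h2 : Filter.Tendsto (fun n : ℕ => C ^ ((n : ℝ))⁻¹) Filter.atTop (nhds 1) := by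
      have := (Real.continuousAt_const_rpow (a := C) (b := 0) hC0.ne').tendsto.comp h1
      simpa [Real.rpow_zero, Function.comp_def] using this
    have := h2.const_mul ‖c‖
    simpa using this
  refine ge_of_tendsto htend ?_
  filter_upwards [Filter.eventually_ge_atTop 1] with n hn
  have hn0 : n ≠ 0 := by omega
  calc specRad (c • b) ≤ ‖(c • b) ^ n‖ ^ ((n : ℝ))⁻¹ := specRad_le _ ⟨n, by omega⟩
    _ = (‖c‖ ^ n * ‖b ^ n‖) ^ ((n : ℝ))⁻¹ := by
        rw [smul_pow, norm_smul, norm_pow]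
    _ = (‖c‖ ^ n) ^ ((n : ℝ))⁻¹ * ‖b ^ n‖ ^ ((n : ℝ))⁻¹ := by
        rw [Real.mul_rpow (pow_nonneg (norm_nonneg _) _) (norm_nonneg _)]
    _ ≤ ‖c‖ * C ^ ((n : ℝ))⁻¹ := by
        rw [Real.pow_rpow_inv_natCast (norm_nonneg c) hn0]
        exact mul_le_mul_of_nonneg_left
          (Real.rpow_le_rpow (norm_nonneg _) (hb' n) (by positivity)) (norm_nonneg c)

theorem stmt6 {k A : Type*} [DenselyNormedField k] [CompleteSpace k]
    [IsUltrametricDist k] [NormedCommRing A] [NormOneClass A] [IsUltrametricDist A]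
    [NormedAlgebra k A] [CompleteSpace A] :
    (⋂ r ∈ Set.Ioi (1 : ℝ), kball k r • {a : A | PowBdd a}) =
      {a : A | specRad a ≤ 1} := by
  ext a
  simp only [Set.mem_iInter, Set.mem_setOf_eq]
  constructor
  · intro h
    have key : ∀ r > (1:ℝ), specRad a ≤ r := by
      intro r hr
      obtain ⟨c, hc, b, hb, rfl⟩ := Set.mem_smul.mp (h r hr)
      exact (specRad_smul_le c b hb).trans hc
    by_contra hlt
    push_neg at hlt
    have := key ((1 + specRad a) / 2) (by linarith)
    linarith
  · intro ha r hr
    obtain ⟨c, hc1, hcr⟩ := NormedField.exists_lt_norm_lt k (zero_le_one) hr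
    have hc0 : c ≠ 0 := by
      intro h; rw [h, norm_zero] at hc1; linarith
    have hcpos : (0:ℝ) < ‖c‖ := lt_trans one_pos hc1
    have h1 : specRad a < ‖c‖ := lt_of_le_of_lt ha hc1
    obtain ⟨m, hm⟩ := exists_lt_of_ciInf_lt h1
    have hm0 : (m : ℕ) ≠ 0 := m.ne_zero
    have ham : ‖a ^ (m : ℕ)‖ ≤ ‖c‖ ^ (m : ℕ) := by
      have := pow_lt_pow_left₀ hm (Real.rpow_nonneg (norm_nonneg _) _) hm0
      rw [← Real.rpow_natCast (‖a ^ (m:ℕ)‖ ^ (((m:ℕ):ℝ))⁻¹) m,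
        ← Real.rpow_mul (norm_nonneg _), inv_mul_cancel₀ (by exact_mod_cast hm0),
        Real.rpow_one] at this
      exact this.le
    set M : ℝ := ∑ s ∈ Finset.range (m : ℕ), ‖a ^ s‖ with hMdef
    have hM0 : 0 ≤ M := Finset.sum_nonneg fun i _ => norm_nonneg _
    have hMle : ∀ s < (m : ℕ), ‖a ^ s‖ ≤ M :=
      fun s hs => Finset.single_le_sum (fun i _ => norm_nonneg _) (Finset.mem_range.mpr hs)
    refine Set.mem_smul.mpr ⟨c, hcr.le, c⁻¹ • a, ⟨M, fun n => ?_⟩, smul_inv_smul₀ hc0 a⟩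
    have key : ‖a ^ n‖ ≤ M * ‖c‖ ^ n := by
      obtain ⟨q, s, hs, hmq, rfl⟩ : ∃ q s, s < (m:ℕ) ∧ (m:ℕ) * q ≤ (m:ℕ) * q + s ∧
          n = (m:ℕ) * q + s :=
        ⟨n / m, n % m, Nat.mod_lt _ m.pos, Nat.le_add_right _ _, (Nat.div_add_mod n m).symm⟩
      calc ‖a ^ ((m:ℕ) * q + s)‖ = ‖(a ^ (m:ℕ)) ^ q * a ^ s‖ := by
              rw [← pow_mul, ← pow_add]
        _ ≤ ‖(a ^ (m:ℕ)) ^ q‖ * ‖a ^ s‖ := norm_mul_le _ _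
        _ ≤ (‖c‖ ^ (m:ℕ)) ^ q * M := by
            refine mul_le_mul ?_ (hMle s hs) (norm_nonneg _) (by positivity)
            calc ‖(a ^ (m:ℕ)) ^ q‖ ≤ ‖a ^ (m:ℕ)‖ ^ q := norm_pow_le _ _
              _ ≤ (‖c‖ ^ (m:ℕ)) ^ q := pow_le_pow_left₀ (norm_nonneg _) ham q
        _ ≤ M * ‖c‖ ^ ((m:ℕ) * q + s) := by
            rw [← pow_mul, mul_comm M]
            exact mul_le_mul_of_nonneg_right (pow_le_pow_right₀ hc1.le hmq) hM0
    rw [smul_pow, norm_smul, norm_pow, norm_inv, inv_pow,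
      inv_mul_le_iff₀ (pow_pos hcpos n), mul_comm]
    exact key
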